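/- Let A be a nonnegative m×m real irreducible matrix whose column sums are all at most 1 and such that at least one column sum is strictly less than 1. Then the matrix I − A is invertible, and the partial sums ∑_{i=0}^{k−1} A^i converge entrywise to (I − A)^{−1} as k → ∞. -/

import Mathlib

open Matrix Finset Filter Topology

/-- A nonnegative square matrix is irreducible: every entry of some power is positive. -/
def MatrixIrreducible {m : Type*} [Fintype m] [DecidableEq m] (A : Matrix m m ℝ) : Prop :=
  ∀ i j, ∃ k : ℕ, 1 ≤ k ∧ 0 < (A ^ k) i j

/-- For a nonnegative irreducible matrix with column sums at most 1 and
at least one strictly deficient column, `I - A` is invertible and the partial sums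
`∑_{i<k} A^i` converge entrywise to `(I - A)⁻¹`. -/
theorem substochastic_irreducible_neumann_series (m : ℕ)
    (A : Matrix (Fin m) (Fin m) ℝ)
    (hA : ∀ i j, 0 ≤ A i j)
    (hirr : MatrixIrreducible A)
    (hcol : ∀ j, ∑ i, A i j ≤ 1)
    (hdef : ∃ j₀, ∑ i, A i j₀ < 1) :
    IsUnit (1 - A) ∧
      Filter.Tendsto (fun k : ℕ => ∑ i ∈ Finset.range k, A ^ i)
        Filter.atTop (nhds (1 - A)⁻¹) := by
  classical
  obtain ⟨j₀, hj₀⟩ := hdef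
  set s : ℕ → Fin m → ℝ := fun k j => ∑ i, (A ^ k) i j with hs
  have hpow_nonneg : ∀ (k : ℕ) (i j : Fin m), 0 ≤ (A ^ k) i j := by
    intro k
    induction k with
    | zero =>
      intro i j
      by_cases h : i = j <;> simp [pow_zero, Matrix.one_apply, h]
    | succ k ih =>
      intro i j
      rw [pow_succ, Matrix.mul_apply]
      exact Finset.sum_nonneg fun l _ => mul_nonneg (ih i l) (hA l j)
  have hs_nonneg : ∀ k j, 0 ≤ s k j := fun k j =>
    Finset.sum_nonneg fun i _ => hpow_nonneg k i j
  have hs_add : ∀ a b j, s (a + b) j = ∑ l, s a l * (A ^ b) l j := by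
    intro a b j
    simp only [hs, pow_add, Matrix.mul_apply]
    rw [Finset.sum_comm]
    simp [Finset.sum_mul]
  have hs1 : ∀ l, s 1 l ≤ 1 := by
    intro l; simpa [hs, pow_one] using hcol l
  have hs1j₀ : s 1 j₀ < 1 := by simpa [hs, pow_one] using hj₀
  have hs_le_one : ∀ k j, s k j ≤ 1 := by
    intro k
    induction k with
    | zero => intro j; simp [hs, pow_zero, Matrix.one_apply]
    | succ k ih =>
      intro j
      rw [show k + 1 = 1 + k by ring, hs_add]
      calc ∑ l, s 1 l * (A ^ k) l j ≤ ∑ l, (A ^ k) l j :=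
            Finset.sum_le_sum fun l _ =>
              mul_le_of_le_one_left (hpow_nonneg k l j) (hs1 l)
        _ = s k j := rfl
        _ ≤ 1 := ih j
  -- column sums strictly less than 1 for a suitable power
  have hex : ∀ j : Fin m, ∃ n, 1 ≤ n ∧ s n j < 1 := by
    intro j
    obtain ⟨k, hk1, hkpos⟩ := hirr j₀ j
    refine ⟨1 + k, by omega, ?_⟩
    rw [hs_add]
    calc ∑ l, s 1 l * (A ^ k) l j < ∑ l, (A ^ k) l j := by
          refine Finset.sum_lt_sum (fun l _ =>
            mul_le_of_le_one_left (hpow_nonneg k l j) (hs1 l)) ⟨j₀, Finset.mem_univ _, ?_⟩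
          exact mul_lt_of_lt_one_left hkpos hs1j₀
      _ = s k j := rfl
      _ ≤ 1 := hs_le_one k j
  choose f hf1 hflt using hex
  set N : ℕ := Finset.univ.sup f with hN
  have hN1 : 1 ≤ N := le_trans (hf1 j₀) (Finset.le_sup (Finset.mem_univ j₀))
  have hsN : ∀ j, s N j < 1 := by
    intro j
    have hle : f j ≤ N := Finset.le_sup (Finset.mem_univ j)
    have : s ((N - f j) + f j) j ≤ s (f j) j := by
      rw [hs_add]
      calc ∑ l, s (N - f j) l * (A ^ f j) l j ≤ ∑ l, (A ^ f j) l j :=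
            Finset.sum_le_sum fun l _ =>
              mul_le_of_le_one_left (hpow_nonneg _ l j) (hs_le_one _ l)
        _ = s (f j) j := rfl
    rw [Nat.sub_add_cancel hle] at this
    exact lt_of_le_of_lt this (hflt j)
  have hne : (Finset.univ : Finset (Fin m)).Nonempty := ⟨j₀, Finset.mem_univ _⟩
  set r : ℝ := Finset.univ.sup' hne (s N) with hr
  have hr_le : ∀ j, s N j ≤ r := fun j => Finset.le_sup' _ (Finset.mem_univ j)
  have hr1 : r < 1 := (Finset.sup'_lt_iff hne).mpr fun j _ => hsN j
  have hr0 : 0 ≤ r := le_trans (hs_nonneg N j₀) (hr_le j₀)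
  -- geometric decay of column sums
  have key : ∀ (q t : ℕ) (j : Fin m), s (N * q + t) j ≤ r ^ q := by
    intro q
    induction q with
    | zero => intro t j; simpa using hs_le_one t j
    | succ q ih =>
      intro t j
      have heq : N * (q + 1) + t = N + (N * q + t) := by ring
      rw [heq, hs_add]
      calc ∑ l, s N l * (A ^ (N * q + t)) l j
          ≤ ∑ l, r * (A ^ (N * q + t)) l j :=
            Finset.sum_le_sum fun l _ =>
              mul_le_mul_of_nonneg_right (hr_le l) (hpow_nonneg _ l j)
        _ = r * s (N * q + t) j := by rw [← Finset.mul_sum]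
        _ ≤ r * r ^ q := mul_le_mul_of_nonneg_left (ih t j) hr0
        _ = r ^ (q + 1) := by ring
  have entry_bound : ∀ (k : ℕ) (i j : Fin m), (A ^ k) i j ≤ r ^ (k / N) := by
    intro k i j
    have h1 : (A ^ k) i j ≤ s k j :=
      Finset.single_le_sum (f := fun i => (A ^ k) i j)
        (fun i _ => hpow_nonneg k i j) (Finset.mem_univ i)
    have h2 : s k j ≤ r ^ (k / N) := by
      have := key (k / N) (k % N) j
      rwa [Nat.div_add_mod] at this
    exact le_trans h1 h2
  -- invertibility of 1 - A^N
  have hdetN : (1 - A ^ N).det ≠ 0 := by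
    intro hdet
    obtain ⟨v, hv0, hvz⟩ := (Matrix.exists_mulVec_eq_zero_iff).mpr hdet
    have hfix : ∀ i, v i = ∑ j, (A ^ N) i j * v j := by
      intro i
      have := congrFun hvz i
      simp only [Matrix.sub_mulVec, Matrix.one_mulVec, Pi.sub_apply, Pi.zero_apply,
        sub_eq_zero] at this
      simpa [Matrix.mulVec, dotProduct] using this
    have habs : ∀ i, |v i| ≤ ∑ j, (A ^ N) i j * |v j| := by
      intro i
      rw [hfix i]
      calc |∑ j, (A ^ N) i j * v j| ≤ ∑ j, |(A ^ N) i j * v j| :=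
            Finset.abs_sum_le_sum_abs _ _
        _ = ∑ j, (A ^ N) i j * |v j| := by
            refine Finset.sum_congr rfl fun j _ => ?_
            rw [abs_mul, abs_of_nonneg (hpow_nonneg N i j)]
    have hsum : ∑ i, |v i| ≤ r * ∑ j, |v j| := by
      calc ∑ i, |v i| ≤ ∑ i, ∑ j, (A ^ N) i j * |v j| :=
            Finset.sum_le_sum fun i _ => habs i
        _ = ∑ j, s N j * |v j| := by
            rw [Finset.sum_comm]
            exact Finset.sum_congr rfl fun j _ => by
              simp [hs, Finset.sum_mul]
        _ ≤ ∑ j, r * |v j| :=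
            Finset.sum_le_sum fun j _ =>
              mul_le_mul_of_nonneg_right (hr_le j) (abs_nonneg _)
        _ = r * ∑ j, |v j| := by rw [← Finset.mul_sum]
    have hpos : 0 < ∑ i, |v i| := by
      obtain ⟨i, hi⟩ := Function.ne_iff.mp hv0
      exact Finset.sum_pos' (fun i _ => abs_nonneg _)
        ⟨i, Finset.mem_univ _, abs_pos.mpr hi⟩
    nlinarith
  -- invertibility of 1 - A
  have hgeoN : (∑ i ∈ Finset.range N, A ^ i) * (1 - A) = 1 - A ^ N :=
    geom_sum_mul_neg A N
  have hdet1 : (1 - A).det ≠ 0 := by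
    intro h
    apply hdetN
    rw [← hgeoN, Matrix.det_mul, h, mul_zero]
  have hU : IsUnit (1 - A) :=
    (Matrix.isUnit_iff_isUnit_det _).mpr (isUnit_iff_ne_zero.mpr hdet1)
  refine ⟨hU, ?_⟩
  -- partial sums formula
  have hinv : (1 - A) * (1 - A)⁻¹ = 1 :=
    Matrix.mul_nonsing_inv _ (isUnit_iff_ne_zero.mpr hdet1)
  have hformula : ∀ k : ℕ,
      (∑ i ∈ Finset.range k, A ^ i) = (1 - A ^ k) * (1 - A)⁻¹ := by
    intro k
    have h1 : (∑ i ∈ Finset.range k, A ^ i) * (1 - A) = 1 - A ^ k :=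
      geom_sum_mul_neg A k
    calc (∑ i ∈ Finset.range k, A ^ i)
        = (∑ i ∈ Finset.range k, A ^ i) * ((1 - A) * (1 - A)⁻¹) := by
          rw [hinv, mul_one]
      _ = ((∑ i ∈ Finset.range k, A ^ i) * (1 - A)) * (1 - A)⁻¹ := by
          rw [mul_assoc]
      _ = (1 - A ^ k) * (1 - A)⁻¹ := by rw [h1]
  -- A^k → 0
  have hdiv : Tendsto (fun k : ℕ => k / N) atTop atTop := by
    refine tendsto_atTop_atTop.mpr fun b => ⟨N * b, fun k hk => ?_⟩
    rw [Nat.le_div_iff_mul_le (by omega : 0 < N)]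
    rw [mul_comm]; exact hk
  have hrpow : Tendsto (fun k : ℕ => r ^ (k / N)) atTop (nhds 0) :=
    (tendsto_pow_atTop_nhds_zero_of_lt_one hr0 hr1).comp hdiv
  have hT : Tendsto (fun k : ℕ => A ^ k) atTop (nhds (0 : Matrix (Fin m) (Fin m) ℝ)) := by
    refine tendsto_pi_nhds.mpr ?_
    intro i
    rw [tendsto_pi_nhds]
    intro j
    refine tendsto_of_tendsto_of_tendsto_of_le_of_le tendsto_const_nhds hrpow
      (fun k => hpow_nonneg k i j) (fun k => entry_bound k i j)
  have hcont : Continuous fun X : Matrix (Fin m) (Fin m) ℝ => (1 - X) * (1 - A)⁻¹ :=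
    (continuous_const.sub continuous_id).matrix_mul continuous_const
  have := (hcont.tendsto 0).comp hT
  simp only [Function.comp_def, sub_zero, one_mul] at this
  simp only [hformula]
  exact this
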